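/- Let $w$ be a word of length $r \geq 2$ over an alphabet $\Sigma$ in which all $r$ letters are distinct, and let $n \geq r$. For any labeling $L : (\mathbb{Z}/n\mathbb{Z})^d \to \Sigma$, the number of occurrences of $w$ (pairs $(x,v)$, $v \in \{-1,0,1\}^d\setminus\{0\}$, with $L(x + (i-1)v) = w_i$ for all $1 \leq i \leq r$) is at most $(3^{d-1}/(r-1)) n^d$. -/

import Mathlib

open Finset

namespace CatAux

variable {G : Type*} [AddCommGroup G] [Fintype G]

def tr (e : G) (g : G → ℝ) : G → ℝ := fun p => g (p + e)

def opA (e : G) (g : G → ℝ) : G → ℝ := fun p => g (p + e) + g p + g (p + -e)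

def opK : List G → (G → ℝ) → (G → ℝ)
  | [], g => g
  | e :: l, g => opA e (opK l g)

def ip (f g : G → ℝ) : ℝ := ∑ p, f p * g p

lemma sum_tr (e : G) (F : G → ℝ) : ∑ p, F (p + e) = ∑ p, F p :=
  Equiv.sum_comp (Equiv.addRight e) F

lemma ip_comm (f g : G → ℝ) : ip f g = ip g f := by
  simp [ip, mul_comm]

lemma ip_self_nonneg (f : G → ℝ) : 0 ≤ ip f f :=
  Finset.sum_nonneg fun p _ => mul_self_nonneg _

lemma ip_add_right (f g h : G → ℝ) : ip f (g + h) = ip f g + ip f h := by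
  simp [ip, Pi.add_apply, mul_add, Finset.sum_add_distrib]

lemma ip_sub_right (f g h : G → ℝ) : ip f (g - h) = ip f g - ip f h := by
  simp [ip, Pi.sub_apply, mul_sub, Finset.sum_sub_distrib]

lemma ip_add_left (f g h : G → ℝ) : ip (f + g) h = ip f h + ip g h := by
  rw [ip_comm, ip_add_right, ip_comm h f, ip_comm h g]

lemma ip_sub_left (f g h : G → ℝ) : ip (f - g) h = ip f h - ip g h := by
  rw [ip_comm, ip_sub_right, ip_comm h f, ip_comm h g]

lemma ip_tr_right (f g : G → ℝ) (e : G) : ip f (tr e g) = ip (tr (-e) f) g := by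
  unfold ip tr
  rw [← sum_tr e (fun q => f (q + -e) * g q)]
  simp

lemma ip_tr_tr (f g : G → ℝ) (e : G) : ip (tr e f) (tr e g) = ip f g := by
  unfold ip tr
  rw [← sum_tr e (fun q => f q * g q)]

lemma ip_tr_left (f g : G → ℝ) (e : G) : ip (tr e f) g = ip f (tr (-e) g) := by
  rw [ip_comm, ip_tr_right, ip_comm]

lemma tr_opA (e t : G) (g : G → ℝ) : opA e (tr t g) = tr t (opA e g) := by
  funext p
  simp only [opA, tr]
  rw [add_right_comm p e t, add_right_comm p (-e) t]

lemma tr_opK (l : List G) (t : G) (g : G → ℝ) : opK l (tr t g) = tr t (opK l g) := by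
  induction l with
  | nil => rfl
  | cons e M IH => simp only [opK, IH, tr_opA]

lemma opA_add (e : G) (f g : G → ℝ) : opA e (f + g) = opA e f + opA e g := by
  funext p; simp [opA]; ring

lemma opA_sub (e : G) (f g : G → ℝ) : opA e (f - g) = opA e f - opA e g := by
  funext p; simp [opA]; ring

lemma opK_add (l : List G) (f g : G → ℝ) : opK l (f + g) = opK l f + opK l g := by
  induction l with
  | nil => rfl
  | cons e M IH => simp only [opK, IH, opA_add]

lemma opK_sub (l : List G) (f g : G → ℝ) : opK l (f - g) = opK l f - opK l g := by
  induction l with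
  | nil => rfl
  | cons e M IH => simp only [opK, IH, opA_sub]

lemma opA_eq (e : G) (g : G → ℝ) : opA e g = tr e g + g + tr (-e) g := rfl

lemma ip_opA (f g : G → ℝ) (e : G) : ip f (opA e g) = ip (opA e f) g := by
  rw [opA_eq, opA_eq, ip_add_right, ip_add_right, ip_add_left, ip_add_left,
    ip_tr_right f g e, ip_tr_right f g (-e), neg_neg, ip_tr_left, ip_tr_left, neg_neg]
  ring

lemma opA_opA (e e' : G) (g : G → ℝ) : opA e (opA e' g) = opA e' (opA e g) := by
  funext p
  simp only [opA]
  rw [add_right_comm p e' e, add_right_comm p e' (-e), add_right_comm p (-e') e,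
    add_right_comm p (-e') (-e)]
  ring

lemma opK_opA (l : List G) (e : G) (g : G → ℝ) : opK l (opA e g) = opA e (opK l g) := by
  induction l with
  | nil => rfl
  | cons e' M IH => simp only [opK, IH, opA_opA]

lemma opK_symm (l : List G) (f g : G → ℝ) : ip f (opK l g) = ip g (opK l f) := by
  induction l generalizing f g with
  | nil => simp [opK, ip_comm]
  | cons e M IH =>
    show ip f (opA e (opK M g)) = ip g (opA e (opK M f))
    rw [ip_opA, IH (opA e f) g, opK_opA]

lemma kbound (l : List G) (g : G → ℝ) :
    ip g (opK l g) ≤ 3 ^ l.length * ip g g ∧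
      -(3 ^ l.length * ip g g) ≤ 3 * ip g (opK l g) := by
  induction l generalizing g with
  | nil =>
    have := ip_self_nonneg g
    constructor <;> simp [opK] <;> linarith
  | cons e M IH =>
    obtain ⟨hg1, hg2⟩ := IH g
    obtain ⟨hp1, hp2⟩ := IH (g + tr e g)
    obtain ⟨hm1, hm2⟩ := IH (g - tr e g)
    have t1 : ip (tr e g) (opK M (tr e g)) = ip g (opK M g) := by
      rw [tr_opK, ip_tr_tr]
    have t2 : ip g (opK M (tr e g)) = ip g (tr e (opK M g)) := by rw [tr_opK]
    have t3 : ip (tr e g) (opK M g) = ip g (tr (-e) (opK M g)) := by rw [ip_tr_left]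
    have hXsplit : ip g (opK (e :: M) g) =
        ip g (tr e (opK M g)) + ip g (opK M g) + ip g (tr (-e) (opK M g)) := by
      show ip g (opA e (opK M g)) = _
      rw [opA_eq, ip_add_right, ip_add_right]
    have eP : ip (g + tr e g) (opK M (g + tr e g)) =
        ip g (opK (e :: M) g) + ip g (opK M g) := by
      rw [opK_add, ip_add_right, ip_add_left, ip_add_left, t1, t2, t3]
      linear_combination -hXsplit
    have eM2 : ip (g - tr e g) (opK M (g - tr e g)) =
        3 * ip g (opK M g) - ip g (opK (e :: M) g) := by
      rw [opK_sub, ip_sub_right, ip_sub_left, ip_sub_left, t1, t2, t3]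
      linear_combination hXsplit
    have eNP : ip (g + tr e g) (g + tr e g) = 2 * ip g g + 2 * ip g (tr e g) := by
      rw [ip_add_right, ip_add_left, ip_add_left, ip_tr_tr, ip_comm (tr e g) g]
      ring
    have eNM : ip (g - tr e g) (g - tr e g) = 2 * ip g g - 2 * ip g (tr e g) := by
      rw [ip_sub_right, ip_sub_left, ip_sub_left, ip_tr_tr, ip_comm (tr e g) g]
      ring
    have hzp := ip_self_nonneg (g + tr e g)
    have hzm := ip_self_nonneg (g - tr e g)
    have hN0 := ip_self_nonneg g
    have hm'0 : (0:ℝ) ≤ 3 ^ M.length := by positivity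
    rw [eP, eNP] at hp1 hp2
    rw [eM2, eNM] at hm1 hm2
    rw [eNP] at hzp
    rw [eNM] at hzm
    have hZN : ip g (tr e g) ≤ ip g g := by linarith
    have hZN' : -(ip g g) ≤ ip g (tr e g) := by linarith
    have pZN : 3 ^ M.length * ip g (tr e g) ≤ 3 ^ M.length * ip g g :=
      mul_le_mul_of_nonneg_left hZN hm'0
    have pZN' : 3 ^ M.length * (-(ip g g)) ≤ 3 ^ M.length * ip g (tr e g) :=
      mul_le_mul_of_nonneg_left hZN' hm'0
    simp only [List.length_cons, pow_succ]
    constructor <;> nlinarith [hp1, hp2, hm1, hm2, hg1, hg2, pZN, pZN', hN0, hm'0]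

lemma pol (l : List G) (a b : G → ℝ) (hab : ip a b = 0) :
    ip a (opK l b) ≤ 3 ^ l.length / 3 * (ip a a + ip b b) := by
  obtain ⟨hp1, -⟩ := kbound l (a + b)
  obtain ⟨-, hm2⟩ := kbound l (a - b)
  have e1 : ip (a + b) (opK l (a + b)) =
      ip a (opK l a) + 2 * ip a (opK l b) + ip b (opK l b) := by
    rw [opK_add, ip_add_right, ip_add_left, ip_add_left, opK_symm l b a]
    ring
  have e2 : ip (a - b) (opK l (a - b)) =
      ip a (opK l a) - 2 * ip a (opK l b) + ip b (opK l b) := by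
    rw [opK_sub, ip_sub_right, ip_sub_left, ip_sub_left, opK_symm l b a]
    ring
  have e3 : ip (a + b) (a + b) = ip a a + ip b b := by
    rw [ip_add_right, ip_add_left, ip_add_left, hab, ip_comm b a, hab]; ring
  have e4 : ip (a - b) (a - b) = ip a a + ip b b := by
    rw [ip_sub_right, ip_sub_left, ip_sub_left, hab, ip_comm b a, hab]; ring
  rw [e1, e3] at hp1
  rw [e2, e4] at hm2
  linarith

def Wm : List G → Multiset G
  | [] => {0}
  | e :: l => (Wm l).map (· + e) + Wm l + (Wm l).map (· + -e)

lemma opK_Wm (l : List G) (g : G → ℝ) (p : G) :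
    opK l g p = ((Wm l).map (fun u => g (p + u))).sum := by
  induction l generalizing p with
  | nil => simp [opK, Wm]
  | cons e M IH =>
    show opK M g (p + e) + opK M g p + opK M g (p + -e) = _
    simp only [Wm, Multiset.map_add, Multiset.sum_add, Multiset.map_map, IH,
      Function.comp]
    have h1 : Multiset.map (fun u => g (p + e + u)) (Wm M) =
        Multiset.map (fun x => g (p + (x + e))) (Wm M) :=
      Multiset.map_congr rfl fun x _ => by rw [add_right_comm, add_assoc]
    have h2 : Multiset.map (fun u => g (p + -e + u)) (Wm M) =
        Multiset.map (fun x => g (p + (x + -e))) (Wm M) :=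
      Multiset.map_congr rfl fun x _ => by rw [add_right_comm, add_assoc]
    rw [h1, h2]

lemma zip_mem : ∀ (l : List (ℤ × G)), (∀ q ∈ l, q.1 = 0 ∨ q.1 = 1 ∨ q.1 = -1) →
    (l.map (fun q => q.1 • q.2)).sum ∈ Wm (l.map Prod.snd)
  | [], _ => by simp [Wm]
  | q :: l, h => by
    have ih := zip_mem l fun x hx => h x (List.mem_cons_of_mem _ hx)
    simp only [List.map_cons, List.sum_cons, Wm]
    rcases h q List.mem_cons_self with h0 | h1 | h2
    · rw [h0, zero_smul, zero_add]
      exact Multiset.mem_add.2 (Or.inl (Multiset.mem_add.2 (Or.inr ih)))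
    · rw [h1, one_smul]
      exact Multiset.mem_add.2 (Or.inl (Multiset.mem_add.2 (Or.inl
        (Multiset.mem_map.2 ⟨_, ih, add_comm _ _⟩))))
    · rw [h2, neg_smul, one_smul]
      exact Multiset.mem_add.2 (Or.inr (Multiset.mem_map.2 ⟨_, ih, add_comm _ _⟩))

lemma le_of_nodup_subset [DecidableEq G] {s t : Multiset G} (h : s.Nodup)
    (hsub : ∀ x ∈ s, x ∈ t) : s ≤ t := by
  rw [Multiset.le_iff_count]
  intro x
  by_cases hx : x ∈ s
  · rw [Multiset.count_eq_one_of_mem h hx]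
    exact Multiset.one_le_count_iff_mem.2 (hsub x hx)
  · simp [Multiset.count_eq_zero_of_notMem hx]

lemma msum_le {s t : Multiset ℝ} (h : s ≤ t) (ht : ∀ x ∈ t, 0 ≤ x) : s.sum ≤ t.sum := by
  obtain ⟨u, rfl⟩ := Multiset.le_iff_exists_add.1 h
  simp only [Multiset.sum_add]
  have : 0 ≤ u.sum := Multiset.sum_nonneg fun x hx => ht x (by simp [hx])
  linarith

end CatAux

open CatAux

theorem stmt_16 (n d r : ℕ) [NeZero n] (hr : 2 ≤ r) (hn : r ≤ n)
    {Alphabet : Type*} [DecidableEq Alphabet]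
    (w : Fin r → Alphabet) (hw : Function.Injective w)
    (L : (Fin d → ZMod n) → Alphabet) :
    ((Finset.univ.filter
        (fun p : (Fin d → ZMod n) × (Fin d → ZMod n) =>
          (∀ j, p.2 j = 0 ∨ p.2 j = 1 ∨ p.2 j = -1) ∧ p.2 ≠ 0 ∧
          ∀ i : Fin r, L (p.1 + (i : ℕ) • p.2) = w i)).card : ℝ)
      ≤ 3 ^ (d - 1) * n ^ d / ((r : ℝ) - 1) := by
  classical
  have hn2 : 2 ≤ n := hr.trans hn
  haveI : Fact (1 < n) := ⟨hn2⟩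
  have h2r : (2:ℝ) ≤ (r:ℝ) := by exact_mod_cast hr
  rw [le_div_iff₀ (by linarith)]
  set Occ : Finset ((Fin d → ZMod n) × (Fin d → ZMod n)) :=
    Finset.univ.filter
        (fun p : (Fin d → ZMod n) × (Fin d → ZMod n) =>
          (∀ j, p.2 j = 0 ∨ p.2 j = 1 ∨ p.2 j = -1) ∧ p.2 ≠ 0 ∧
          ∀ i : Fin r, L (p.1 + (i : ℕ) • p.2) = w i) with hOcc
  set A : Finset (Fin d → ZMod n) :=
    Finset.univ.filter (fun p => ∃ j : Fin r, (j : ℕ) % 2 = 0 ∧ L p = w j) with hA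
  set B : Finset (Fin d → ZMod n) :=
    Finset.univ.filter (fun p => ∃ j : Fin r, (j : ℕ) % 2 = 1 ∧ L p = w j) with hB
  set V : Finset (Fin d → ZMod n) :=
    Finset.univ.filter (fun v => ∀ j, v j = 0 ∨ v j = 1 ∨ v j = -1) with hV
  set Q : Finset ((Fin d → ZMod n) × (Fin d → ZMod n)) :=
    (Finset.univ ×ˢ V).filter (fun yv => yv.1 ∈ A ∧ yv.1 + yv.2 ∈ B) with hQ
  set a : (Fin d → ZMod n) → ℝ := fun p => if p ∈ A then 1 else 0 with ha
  set b : (Fin d → ZMod n) → ℝ := fun p => if p ∈ B then 1 else 0 with hb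
  set bl : List (Fin d → ZMod n) := List.ofFn (fun j => Pi.single j (1 : ZMod n)) with hbl
  have widx : ∀ (c c' : ℕ) (hc : c < r) (hc' : c' < r), w ⟨c, hc⟩ = w ⟨c', hc'⟩ → c = c' := by
    intro c c' hc hc' h
    exact congrArg Fin.val (hw h)
  have occ_label : ∀ x v, (x, v) ∈ Occ → ∀ (i : ℕ) (hi : i < r), L (x + i • v) = w ⟨i, hi⟩ := by
    intro x v hx i hi
    exact (Finset.mem_filter.1 hx).2.2.2 ⟨i, hi⟩
  -- Step 1: injection
  have key1 : Occ.card * (r - 1) ≤ Q.card := by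
    have hcard : (Occ ×ˢ (Finset.univ : Finset (Fin (r - 1)))).card = Occ.card * (r - 1) := by
      rw [Finset.card_product, Finset.card_univ, Fintype.card_fin]
    rw [← hcard]
    apply Finset.card_le_card_of_injOn
      (fun t => if (t.2 : ℕ) % 2 = 0 then (t.1.1 + (t.2 : ℕ) • t.1.2, t.1.2)
        else (t.1.1 + (t.2 : ℕ) • t.1.2 + t.1.2, -t.1.2))
    · rintro ⟨⟨x, v⟩, i⟩ ht
      have hx : (x, v) ∈ Occ := (Finset.mem_product.1 ht).1
      have hv : ∀ j, v j = 0 ∨ v j = 1 ∨ v j = -1 := (Finset.mem_filter.1 hx).2.1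
      have hir : (i : ℕ) < r := by have := i.2; omega
      have hi1r : (i : ℕ) + 1 < r := by have := i.2; omega
      have h1 : L (x + (i : ℕ) • v) = w ⟨i, hir⟩ := occ_label x v hx i hir
      have h2 : L (x + (i : ℕ) • v + v) = w ⟨(i : ℕ) + 1, hi1r⟩ := by
        have := occ_label x v hx ((i : ℕ) + 1) hi1r
        rwa [succ_nsmul, ← add_assoc] at this
      have hvV : v ∈ V := Finset.mem_filter.2 ⟨Finset.mem_univ _, hv⟩
      have hnvV : -v ∈ V := by
        refine Finset.mem_filter.2 ⟨Finset.mem_univ _, fun j => ?_⟩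
        rcases hv j with h | h | h
        · exact Or.inl (by simp [h])
        · exact Or.inr (Or.inr (by simp [h]))
        · exact Or.inr (Or.inl (by simp [h]))
      dsimp only
      split_ifs with hpar
      · refine Finset.mem_filter.2 ⟨Finset.mem_product.2 ⟨Finset.mem_univ _, hvV⟩, ?_, ?_⟩
        · exact Finset.mem_filter.2 ⟨Finset.mem_univ _, ⟨⟨i, hir⟩, hpar, h1⟩⟩
        · exact Finset.mem_filter.2 ⟨Finset.mem_univ _, ⟨⟨(i : ℕ) + 1, hi1r⟩, by simp; omega, h2⟩⟩
      · refine Finset.mem_filter.2 ⟨Finset.mem_product.2 ⟨Finset.mem_univ _, hnvV⟩, ?_, ?_⟩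
        · exact Finset.mem_filter.2 ⟨Finset.mem_univ _, ⟨⟨(i : ℕ) + 1, hi1r⟩, by simp; omega, h2⟩⟩
        · refine Finset.mem_filter.2 ⟨Finset.mem_univ _, ⟨⟨i, hir⟩, by simp; omega, ?_⟩⟩
          rwa [add_neg_cancel_right]
    · rintro ⟨⟨x, v⟩, i⟩ ht ⟨⟨x', v'⟩, i'⟩ ht' heq
      have hx : (x, v) ∈ Occ := (Finset.mem_product.1 ht).1
      have hx' : (x', v') ∈ Occ := (Finset.mem_product.1 ht').1
      have hir : (i : ℕ) < r := by have := i.2; omega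
      have hi1r : (i : ℕ) + 1 < r := by have := i.2; omega
      have hir' : (i' : ℕ) < r := by have := i'.2; omega
      have hi1r' : (i' : ℕ) + 1 < r := by have := i'.2; omega
      have h1 : L (x + (i : ℕ) • v) = w ⟨i, hir⟩ := occ_label x v hx i hir
      have h2 : L (x + (i : ℕ) • v + v) = w ⟨(i : ℕ) + 1, hi1r⟩ := by
        have := occ_label x v hx ((i : ℕ) + 1) hi1r
        rwa [succ_nsmul, ← add_assoc] at this
      have h1' : L (x' + (i' : ℕ) • v') = w ⟨i', hir'⟩ := occ_label x' v' hx' i' hir'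
      have h2' : L (x' + (i' : ℕ) • v' + v') = w ⟨(i' : ℕ) + 1, hi1r'⟩ := by
        have := occ_label x' v' hx' ((i' : ℕ) + 1) hi1r'
        rwa [succ_nsmul, ← add_assoc] at this
      simp only [Prod.mk.injEq]
      dsimp only at heq
      split_ifs at heq with hp hp' hp'
      · -- even, even
        rw [Prod.mk.injEq] at heq
        obtain ⟨e1, e2⟩ := heq
        have hii : (i : ℕ) = (i' : ℕ) := by
          apply widx _ _ hir hir'
          rw [← h1, ← h1', e1]
        have hvv : v = v' := e2
        have hxx : x = x' := by
          rw [hvv, hii] at e1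
          exact add_right_cancel e1
        exact ⟨⟨hxx, hvv⟩, Fin.ext hii⟩
      · -- even, odd : contradiction
        rw [Prod.mk.injEq] at heq
        obtain ⟨e1, e2⟩ := heq
        exfalso
        have ep2 : x + (i : ℕ) • v + v = x' + (i' : ℕ) • v' := by
          rw [e1, e2, add_neg_cancel_right]
        have c1 : (i : ℕ) = (i' : ℕ) + 1 := by
          apply widx _ _ hir hi1r'
          rw [← h1, ← h2', e1]
        have c2 : (i : ℕ) + 1 = (i' : ℕ) := by
          apply widx _ _ hi1r hir'
          rw [← h2, ← h1', ep2]
        omega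
      · -- odd, even : contradiction
        rw [Prod.mk.injEq] at heq
        obtain ⟨e1, e2⟩ := heq
        exfalso
        have c1 : (i : ℕ) + 1 = (i' : ℕ) := by
          apply widx _ _ hi1r hir'
          rw [← h2, ← h1', e1]
        have ep2 : x + (i : ℕ) • v = x' + (i' : ℕ) • v' + v' := by
          rw [← add_neg_cancel_right (x + (i : ℕ) • v) v, e1, e2]
        have c2 : (i : ℕ) = (i' : ℕ) + 1 := by
          apply widx _ _ hir hi1r'
          rw [← h1, ← h2', ep2]
        omega
      · -- odd, odd
        rw [Prod.mk.injEq] at heq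
        obtain ⟨e1, e2⟩ := heq
        have hvv : v = v' := neg_injective e2
        have hii : (i : ℕ) = (i' : ℕ) := by
          have : (i : ℕ) + 1 = (i' : ℕ) + 1 := by
            apply widx _ _ hi1r hi1r'
            rw [← h2, ← h2', e1]
          omega
        have hxx : x = x' := by
          rw [hvv, hii] at e1
          have := add_right_cancel e1
          exact add_right_cancel this
        exact ⟨⟨hxx, hvv⟩, Fin.ext hii⟩
  -- Step 2: from Q to the quadratic form
  have bnn : ∀ p, 0 ≤ b p := by
    intro p; rw [hb]; dsimp only; split_ifs <;> norm_num
  have ann : ∀ p, 0 ≤ a p := by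
    intro p; rw [ha]; dsimp only; split_ifs <;> norm_num
  have memW : ∀ v ∈ V, v ∈ Wm bl := by
    intro v hv
    have hv' : ∀ j, v j = 0 ∨ v j = 1 ∨ v j = -1 := (Finset.mem_filter.1 hv).2
    set c : Fin d → ℤ := fun j => if v j = 1 then 1 else if v j = -1 then -1 else 0 with hc
    have hone : (0 : ZMod n) ≠ 1 := by
      intro hh
      exact one_ne_zero hh.symm
    have hcast : ∀ j, ((c j : ℤ) : ZMod n) = v j := by
      intro j
      rw [hc]
      rcases hv' j with h | h | h
      · have h1 : v j ≠ 1 := by rw [h]; exact hone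
        have h2 : v j ≠ -1 := by
          rw [h]; intro hh
          exact hone (by rw [← neg_neg (1 : ZMod n), ← hh, neg_zero])
        dsimp only
        rw [if_neg h1, if_neg h2, h]
        norm_num
      · dsimp only
        rw [if_pos h, h]
        norm_num
      · by_cases h1 : v j = 1
        · dsimp only
          rw [if_pos h1, h1]
          norm_num
        · dsimp only
          rw [if_neg h1, if_pos h, h]
          norm_num
    have hc3 : ∀ (q : ℤ × (Fin d → ZMod n)),
        q ∈ List.ofFn (fun j => (c j, Pi.single j (1 : ZMod n))) →
        q.1 = 0 ∨ q.1 = 1 ∨ q.1 = -1 := by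
      intro q hq
      obtain ⟨j, rfl⟩ := List.mem_ofFn.1 hq
      rw [hc]
      dsimp only
      split_ifs <;> simp
    have hzm := zip_mem (List.ofFn (fun j => (c j, Pi.single j (1 : ZMod n)))) hc3
    rw [List.map_ofFn, List.map_ofFn] at hzm
    have hsum : (List.ofFn ((fun q : ℤ × (Fin d → ZMod n) => q.1 • q.2) ∘
        fun j => (c j, Pi.single j (1 : ZMod n)))).sum = v := by
      rw [List.sum_ofFn]
      funext k
      rw [Finset.sum_apply]
      rw [Finset.sum_eq_single k]
      · simp only [Function.comp, Pi.smul_apply, Pi.single_eq_same]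
        rw [zsmul_eq_mul, mul_one, hcast k]
      · intro j _ hj
        simp only [Function.comp, Pi.smul_apply]
        rw [Pi.single_eq_of_ne (Ne.symm hj), smul_zero]
      · intro hk; exact absurd (Finset.mem_univ k) hk
    rw [hsum] at hzm
    have hbl2 : List.ofFn (Prod.snd ∘ fun j => ((c j : ℤ), Pi.single j (1 : ZMod n))) = bl :=
      congrArg List.ofFn (funext fun j => rfl)
    rwa [hbl2] at hzm
  have step2 : ∀ y, ∑ v ∈ V, b (y + v) ≤ opK bl b y := by
    intro y
    rw [opK_Wm]
    have hsub : V.val ≤ Wm bl := le_of_nodup_subset V.nodup memW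
    have : ∑ v ∈ V, b (y + v) = (V.val.map (fun v => b (y + v))).sum :=
      Finset.sum_eq_multiset_sum _ _
    rw [this]
    apply msum_le (Multiset.map_le_map hsub)
    intro x hx
    obtain ⟨u, -, rfl⟩ := Multiset.mem_map.1 hx
    exact bnn _
  have cardQ : (Q.card : ℝ) = ∑ y : Fin d → ZMod n, ∑ v ∈ V, a y * b (y + v) := by
    rw [hQ, Finset.card_filter, Finset.sum_product]
    push_cast
    refine Finset.sum_congr rfl fun y _ => Finset.sum_congr rfl fun v _ => ?_
    by_cases h1 : y ∈ A <;> by_cases h2 : y + v ∈ B <;> simp [ha, hb, h1, h2]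
  have key2 : (Q.card : ℝ) ≤ ip a (opK bl b) := by
    rw [cardQ, ip]
    apply Finset.sum_le_sum
    intro y _
    rw [← Finset.mul_sum]
    exact mul_le_mul_of_nonneg_left (step2 y) (ann y)
  -- Step 3
  have hipaa : ip a a = (A.card : ℝ) := by
    rw [ip]
    have h1 : ∀ p, a p * a p = a p := by
      intro p; rw [ha]; dsimp only; split_ifs <;> norm_num
    simp only [h1]
    rw [ha]
    rw [Finset.sum_ite_mem, Finset.univ_inter, Finset.sum_const, nsmul_eq_mul, mul_one]
  have hipbb : ip b b = (B.card : ℝ) := by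
    rw [ip]
    have h1 : ∀ p, b p * b p = b p := by
      intro p; rw [hb]; dsimp only; split_ifs <;> norm_num
    simp only [h1]
    rw [hb]
    rw [Finset.sum_ite_mem, Finset.univ_inter, Finset.sum_const, nsmul_eq_mul, mul_one]
  have hdisj : Disjoint A B := by
    rw [Finset.disjoint_left]
    intro p hpA hpB
    obtain ⟨j1, hj1, hL1⟩ := (Finset.mem_filter.1 hpA).2
    obtain ⟨j2, hj2, hL2⟩ := (Finset.mem_filter.1 hpB).2
    have : j1 = j2 := hw (hL1.symm.trans hL2)
    rw [this] at hj1
    omega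
  have hab0 : ip a b = 0 := by
    rw [ip]
    apply Finset.sum_eq_zero
    intro p _
    by_cases h1 : p ∈ A
    · have h2 : p ∉ B := Finset.disjoint_left.1 hdisj h1
      rw [hb]; dsimp only; rw [if_neg h2, mul_zero]
    · rw [ha]; dsimp only; rw [if_neg h1, zero_mul]
  have hcardsum : (A.card : ℝ) + (B.card : ℝ) ≤ (n : ℝ) ^ d := by
    have h1 : A.card + B.card ≤ n ^ d := by
      rw [← Finset.card_union_of_disjoint hdisj]
      calc (A ∪ B).card ≤ (Finset.univ : Finset (Fin d → ZMod n)).card :=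
            Finset.card_le_univ _
        _ = n ^ d := by
            rw [Finset.card_univ, Fintype.card_fun, ZMod.card, Fintype.card_fin]
    exact_mod_cast h1
  have hbllen : bl.length = d := by rw [hbl, List.length_ofFn]
  have key3 : ip a (opK bl b) ≤ 3 ^ (d - 1) * (n : ℝ) ^ d := by
    have h1 := pol bl a b hab0
    rw [hbllen, hipaa, hipbb] at h1
    have h2 : (3 : ℝ) ^ d / 3 * ((A.card : ℝ) + B.card) ≤ 3 ^ d / 3 * (n : ℝ) ^ d := by
      apply mul_le_mul_of_nonneg_left hcardsum (by positivity)
    have h3 : (3 : ℝ) ^ d / 3 * (n : ℝ) ^ d ≤ 3 ^ (d - 1) * (n : ℝ) ^ d := by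
      apply mul_le_mul_of_nonneg_right _ (by positivity)
      cases d with
      | zero => norm_num
      | succ k =>
        rw [pow_succ]
        simp
    linarith
  -- combine
  have key1' : (Occ.card : ℝ) * ((r : ℝ) - 1) ≤ (Q.card : ℝ) := by
    have : ((Occ.card * (r - 1) : ℕ) : ℝ) ≤ ((Q.card : ℕ) : ℝ) := by exact_mod_cast key1
    rw [Nat.cast_mul, Nat.cast_sub (by omega : 1 ≤ r)] at this
    simpa using this
  calc (Occ.card : ℝ) * ((r : ℝ) - 1) ≤ (Q.card : ℝ) := key1'
    _ ≤ ip a (opK bl b) := key2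
    _ ≤ 3 ^ (d - 1) * (n : ℝ) ^ d := key3
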